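/- (Klein's inequality, spectral form) Let H be a complex Hilbert space with two Hilbert (orthonormal) bases (φ_m)_{m∈ℕ} and (ψ_n)_{n∈ℕ}, let a, b : ℕ → [0,1] be summable, and let f : [0,1] → ℝ be convex, continuously differentiable with derivative f', and satisfy f(0) = 0. Then Σ_n f(b_n) ≤ Σ_m f(a_m) + Σ_n Σ_m |⟨φ_m, ψ_n⟩|² · (b_n − a_m) · f'(b_n). (This is the key estimate giving Tr f(B) ≤ Tr f(A) + Tr[(B−A)f'(B)] ≤ Tr f(A) + ‖B−A‖₁·‖f'‖_∞ for the trace-class operators A = Σ_m a_m |φ_m⟩⟨φ_m| and B = Σ_n b_n |ψ_n⟩⟨ψ_n|.) -/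

import Mathlib

open scoped InnerProductSpace

private lemma klein_tangent_le {f f' : ℝ → ℝ} (hconv : ConvexOn ℝ (Set.Icc 0 1) f)
    (hderiv : ∀ x ∈ Set.Icc (0:ℝ) 1, HasDerivAt f (f' x) x)
    {x y : ℝ} (hx : x ∈ Set.Icc (0:ℝ) 1) (hy : y ∈ Set.Icc (0:ℝ) 1) :
    f y ≤ f x + (y - x) * f' y := by
  rcases lt_trichotomy x y with h | h | h
  · have hs := hconv.slope_le_of_hasDerivAt hx hy h (hderiv y hy)
    rw [slope_def_field, div_le_iff₀ (by linarith)] at hs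
    nlinarith
  · simp [h]
  · have hs := hconv.le_slope_of_hasDerivAt hy hx h (hderiv y hy)
    rw [slope_def_field, le_div_iff₀ (by linarith)] at hs
    nlinarith

/-- Klein's inequality, spectral form: for trace-class operators
`A = ∑ m, a m |φ m⟩⟨φ m|` and `B = ∑ n, b n |ψ n⟩⟨ψ n|` with `0 ≤ A, B ≤ 1`, and a convex
continuously differentiable `f : [0,1] → ℝ` with `f 0 = 0`,
`Tr f(B) ≤ Tr f(A) + Tr[(B−A) f'(B)]`. -/
theorem klein_inequality {H : Type*} [NormedAddCommGroup H] [InnerProductSpace ℂ H]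
    (φ ψ : HilbertBasis ℕ ℂ H)
    (a b : ℕ → ℝ) (ha01 : ∀ m, a m ∈ Set.Icc (0 : ℝ) 1) (hb01 : ∀ n, b n ∈ Set.Icc (0 : ℝ) 1)
    (hasum : Summable a) (hbsum : Summable b)
    (f f' : ℝ → ℝ) (hconv : ConvexOn ℝ (Set.Icc 0 1) f) (hf0 : f 0 = 0)
    (hderiv : ∀ x ∈ Set.Icc (0 : ℝ) 1, HasDerivAt f (f' x) x)
    (hf'cont : ContinuousOn f' (Set.Icc 0 1)) :
    ∑' n, f (b n) ≤ ∑' m, f (a m) +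
      ∑' n, ∑' m, ‖⟪(φ m : H), (ψ n : H)⟫_ℂ‖ ^ 2 * (b n - a m) * f' (b n) := by
  set c : ℕ → ℕ → ℝ := fun n m => ‖⟪(φ m : H), (ψ n : H)⟫_ℂ‖ ^ 2 with hc
  have hc0 : ∀ n m, 0 ≤ c n m := fun n m => by positivity
  -- row sums: ∑' m, c n m = 1
  have hrow : ∀ n, HasSum (fun m => c n m) 1 := by
    intro n
    have h := φ.hasSum_inner_mul_inner (ψ n : H) (ψ n : H)
    have h1 : ⟪(ψ n : H), (ψ n : H)⟫_ℂ = 1 := by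
      rw [inner_self_eq_norm_sq_to_K]; simp [ψ.orthonormal.1 n]
    rw [h1] at h
    have h2 : (fun m => ⟪(ψ n : H), (φ m : H)⟫_ℂ * ⟪(φ m : H), (ψ n : H)⟫_ℂ)
        = fun m => ((c n m : ℝ) : ℂ) := by
      funext m
      rw [← inner_conj_symm (ψ n : H) (φ m : H), Complex.conj_mul']
      norm_cast
    rw [h2] at h
    have h3 : HasSum (fun k => ((c n k : ℝ) : ℂ)) ((1 : ℝ) : ℂ) := by
      rw [Complex.ofReal_one]; exact h
    exact Complex.hasSum_ofReal.mp h3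
  -- column sums: ∑' n, c n m = 1
  have hcol : ∀ m, HasSum (fun n => c n m) 1 := by
    intro m
    have h := ψ.hasSum_inner_mul_inner (φ m : H) (φ m : H)
    have h1 : ⟪(φ m : H), (φ m : H)⟫_ℂ = 1 := by
      rw [inner_self_eq_norm_sq_to_K]; simp [φ.orthonormal.1 m]
    rw [h1] at h
    have h2 : (fun n => ⟪(φ m : H), (ψ n : H)⟫_ℂ * ⟪(ψ n : H), (φ m : H)⟫_ℂ)
        = fun n => ((c n m : ℝ) : ℂ) := by
      funext n
      rw [← inner_conj_symm (ψ n : H) (φ m : H), Complex.mul_conj']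
      norm_cast
    rw [h2] at h
    have h3 : HasSum (fun k => ((c k m : ℝ) : ℂ)) ((1 : ℝ) : ℂ) := by
      rw [Complex.ofReal_one]; exact h
    exact Complex.hasSum_ofReal.mp h3
  -- bound for f'
  obtain ⟨M, hM⟩ := isCompact_Icc.exists_bound_of_continuousOn hf'cont
  have hM0 : 0 ≤ M := le_trans (norm_nonneg _) (hM 0 (by norm_num))
  -- bound for f : |f x| ≤ K * x on [0,1]
  set K : ℝ := max |f 1| |f' 0| with hK
  have hK0 : 0 ≤ K := le_trans (abs_nonneg _) (le_max_left _ _)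
  have hfb : ∀ x ∈ Set.Icc (0:ℝ) 1, |f x| ≤ K * x := by
    intro x hx
    have hup : f x ≤ x * f 1 := by
      have h := hconv.2 (show (1:ℝ) ∈ Set.Icc (0:ℝ) 1 by norm_num)
        (show (0:ℝ) ∈ Set.Icc (0:ℝ) 1 by norm_num)
        hx.1 (show (0:ℝ) ≤ 1 - x by linarith [hx.2]) (show x + (1 - x) = 1 by ring)
      simpa [hf0, smul_eq_mul] using h
    have hlo : x * f' 0 ≤ f x := by
      have := klein_tangent_le hconv hderiv hx (by norm_num : (0:ℝ) ∈ Set.Icc (0:ℝ) 1)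
      rw [hf0] at this
      linarith
    rw [abs_le]
    constructor
    · have h1 : |f' 0| ≤ K := le_max_right _ _
      have h2 : -(K * x) ≤ x * f' 0 := by nlinarith [hx.1, neg_abs_le (f' 0)]
      linarith
    · have h1 : |f 1| ≤ K := le_max_left _ _
      nlinarith [hx.1, le_abs_self (f 1)]
  have hfbK : ∀ x ∈ Set.Icc (0:ℝ) 1, |f x| ≤ K := by
    intro x hx
    calc |f x| ≤ K * x := hfb x hx
    _ ≤ K * 1 := by nlinarith [hx.2]
    _ = K := mul_one K
  -- summability of f ∘ a, f ∘ b
  have sfa : Summable (fun m => f (a m)) :=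
    Summable.of_norm_bounded (hasum.mul_left K)
      (fun m => by simpa [Real.norm_eq_abs] using hfb _ (ha01 m))
  have sfb : Summable (fun n => f (b n)) :=
    Summable.of_norm_bounded (hbsum.mul_left K)
      (fun n => by simpa [Real.norm_eq_abs] using hfb _ (hb01 n))
  -- inner summabilities (fixed n)
  have scaInner : ∀ n, Summable (fun m => c n m * a m) := by
    intro n
    refine Summable.of_nonneg_of_le (fun m => mul_nonneg (hc0 n m) (ha01 m).1) ?_ (hrow n).summable
    intro m
    nlinarith [(ha01 m).2, hc0 n m, (ha01 m).1]
  -- summability of the double family  (m,n) ↦ c n m * a m, then Fubini info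
  have Fsum : Summable (fun p : ℕ × ℕ => c p.2 p.1 * a p.1) := by
    apply (summable_prod_of_nonneg ?_).mpr
    · constructor
      · intro m; exact (hcol m).summable.mul_right (a m)
      · apply Summable.congr hasum
        intro m
        show a m = ∑' n, c n m * a m
        rw [tsum_mul_right, (hcol m).tsum_eq, one_mul]
    · intro p; exact mul_nonneg (hc0 _ _) (ha01 _).1
  have Pa : Summable (fun p : ℕ × ℕ => c p.1 p.2 * a p.2) := Fsum.prod_symm
  have sca : Summable (fun n => ∑' m, c n m * a m) :=
    ((summable_prod_of_nonneg (fun p => mul_nonneg (hc0 _ _) (ha01 _).1)).mp Pa).2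
  -- summability of c n m * f (a m) over the product, for Fubini
  have Pfa : Summable (fun p : ℕ × ℕ => c p.1 p.2 * f (a p.2)) := by
    refine Summable.of_norm_bounded (Pa.mul_left K) ?_
    intro p
    rw [Real.norm_eq_abs, abs_mul, abs_of_nonneg (hc0 _ _)]
    calc c p.1 p.2 * |f (a p.2)| ≤ c p.1 p.2 * (K * a p.2) :=
          mul_le_mul_of_nonneg_left (hfb _ (ha01 p.2)) (hc0 _ _)
    _ = K * (c p.1 p.2 * a p.2) := by ring
  have s1 : ∀ n, Summable (fun m => c n m * f (a m)) := by
    intro n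
    refine Summable.of_norm_bounded ((hrow n).summable.mul_right K) ?_
    intro m
    rw [Real.norm_eq_abs, abs_mul, abs_of_nonneg (hc0 _ _)]
    exact mul_le_mul_of_nonneg_left (hfbK _ (ha01 m)) (hc0 _ _)
  have habs : ∀ n m, |b n - a m| ≤ b n + a m := by
    intro n m
    rw [abs_le]
    constructor
    · linarith [(hb01 n).1, (ha01 m).1]
    · linarith [(ha01 m).1]
  have hterm : ∀ n m, ‖c n m * (b n - a m) * f' (b n)‖
      ≤ M * (c n m * b n) + M * (c n m * a m) := by
    intro n m
    rw [Real.norm_eq_abs, abs_mul, abs_mul, abs_of_nonneg (hc0 _ _)]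
    have h2 : |f' (b n)| ≤ M := by
      simpa [Real.norm_eq_abs] using hM _ (hb01 n)
    nlinarith [mul_le_mul (mul_le_mul_of_nonneg_left (habs n m) (hc0 n m)) h2
      (abs_nonneg (f' (b n)))
      (mul_nonneg (hc0 n m) (by linarith [(hb01 n).1, (ha01 m).1]))]
  have s2 : ∀ n, Summable (fun m => c n m * (b n - a m) * f' (b n)) := by
    intro n
    exact Summable.of_norm_bounded
      ((((hrow n).summable.mul_right (b n)).mul_left M).add ((scaInner n).mul_left M))
      (hterm n)
  -- outer summabilities
  have S1 : Summable (fun n => ∑' m, c n m * f (a m)) := by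
    refine Summable.of_norm_bounded (sca.mul_left K) ?_
    intro n
    have hnorm : Summable (fun m => ‖c n m * f (a m)‖) := by
      refine Summable.of_nonneg_of_le (fun m => norm_nonneg _) ?_ ((scaInner n).mul_left K)
      intro m
      rw [Real.norm_eq_abs, abs_mul, abs_of_nonneg (hc0 _ _)]
      calc c n m * |f (a m)| ≤ c n m * (K * a m) :=
            mul_le_mul_of_nonneg_left (hfb _ (ha01 m)) (hc0 _ _)
      _ = K * (c n m * a m) := by ring
    calc ‖∑' m, c n m * f (a m)‖ ≤ ∑' m, ‖c n m * f (a m)‖ := norm_tsum_le_tsum_norm hnorm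
    _ ≤ ∑' m, K * (c n m * a m) := by
        refine Summable.tsum_le_tsum ?_ hnorm ((scaInner n).mul_left K)
        intro m
        rw [Real.norm_eq_abs, abs_mul, abs_of_nonneg (hc0 _ _)]
        calc c n m * |f (a m)| ≤ c n m * (K * a m) :=
              mul_le_mul_of_nonneg_left (hfb _ (ha01 m)) (hc0 _ _)
        _ = K * (c n m * a m) := by ring
    _ = K * ∑' m, c n m * a m := tsum_mul_left
  have S2 : Summable (fun n => ∑' m, c n m * (b n - a m) * f' (b n)) := by
    refine Summable.of_norm_bounded ((hbsum.mul_left M).add (sca.mul_left M)) ?_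
    intro n
    have hnorm : Summable (fun m => ‖c n m * (b n - a m) * f' (b n)‖) :=
      Summable.of_nonneg_of_le (fun m => norm_nonneg _) (hterm n)
        ((((hrow n).summable.mul_right (b n)).mul_left M).add ((scaInner n).mul_left M))
    calc ‖∑' m, c n m * (b n - a m) * f' (b n)‖
        ≤ ∑' m, ‖c n m * (b n - a m) * f' (b n)‖ := norm_tsum_le_tsum_norm hnorm
    _ ≤ ∑' m, (M * (c n m * b n) + M * (c n m * a m)) := by
        refine Summable.tsum_le_tsum (hterm n) hnorm ?_
        exact (((hrow n).summable.mul_right (b n)).mul_left M).add ((scaInner n).mul_left M)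
    _ = (∑' m, M * (c n m * b n)) + ∑' m, M * (c n m * a m) :=
         Summable.tsum_add (((hrow n).summable.mul_right (b n)).mul_left M) ((scaInner n).mul_left M)
    _ = M * ((∑' m, c n m) * b n) + M * ∑' m, c n m * a m := by
        rw [tsum_mul_left, tsum_mul_left, tsum_mul_right]
    _ = M * b n + M * ∑' m, c n m * a m := by rw [(hrow n).tsum_eq, one_mul]
  -- key pointwise inequality, summed over m
  have key : ∀ n, f (b n)
      ≤ (∑' m, c n m * f (a m)) + ∑' m, c n m * (b n - a m) * f' (b n) := by
    intro n
    have e1 : f (b n) = ∑' m, c n m * f (b n) := by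
      rw [tsum_mul_right, (hrow n).tsum_eq, one_mul]
    rw [e1]
    calc ∑' m, c n m * f (b n)
        ≤ ∑' m, (c n m * f (a m) + c n m * (b n - a m) * f' (b n)) := by
          refine Summable.tsum_le_tsum ?_ ((hrow n).summable.mul_right _) ((s1 n).add (s2 n))
          intro m
          have ht := klein_tangent_le hconv hderiv (ha01 m) (hb01 n)
          calc c n m * f (b n)
              ≤ c n m * (f (a m) + (b n - a m) * f' (b n)) :=
                mul_le_mul_of_nonneg_left ht (hc0 n m)
          _ = c n m * f (a m) + c n m * (b n - a m) * f' (b n) := by ring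
    _ = (∑' m, c n m * f (a m)) + ∑' m, c n m * (b n - a m) * f' (b n) :=
         Summable.tsum_add (s1 n) (s2 n)
  -- Fubini for the f(a) double sum
  have fub : (∑' n, ∑' m, c n m * f (a m)) = ∑' m, f (a m) := by
    have := Summable.tsum_comm' (f := fun m n => c n m * f (a m))
      (by exact Pfa.prod_symm) (fun m => (hcol m).summable.mul_right _) s1
    rw [this]
    congr 1
    funext m
    rw [tsum_mul_right, (hcol m).tsum_eq, one_mul]
  calc ∑' n, f (b n)
      ≤ ∑' n, ((∑' m, c n m * f (a m)) + ∑' m, c n m * (b n - a m) * f' (b n)) :=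
        Summable.tsum_le_tsum key sfb (S1.add S2)
  _ = (∑' n, ∑' m, c n m * f (a m)) + ∑' n, ∑' m, c n m * (b n - a m) * f' (b n) :=
        Summable.tsum_add S1 S2
  _ = (∑' m, f (a m)) + ∑' n, ∑' m, c n m * (b n - a m) * f' (b n) := by rw [fub]
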